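/- Let H ≤ G be finite groups, [H,G] the interval of intermediate subgroups, and M_1,...,M_n the coatoms of [H,G] (maximal subgroups of G containing H). Then |H| · ∑_{K ∈ [H,G]} μ(K,G)·|K:H| equals the number of elements of G lying in none of the M_i, i.e., |G \ ⋃_i M_i|. -/

import Mathlib

open Finset

open scoped Classical in
/-- For finite groups `H ≤ G` with coatoms `M_i` of the interval `[H,G]`
(i.e. maximal subgroups of `G` containing `H`),
`|H| · ∑_{K ∈ [H,G]} μ(K,G)·|K:H| = |G \ ⋃ᵢ M_i|`. -/
theorem stmt7 {G : Type*} [Group G] [Fintype G] (H : Subgroup G)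
    (μ : Subgroup G → Subgroup G → ℤ)
    (hμ_self : ∀ K : Subgroup G, μ K K = 1)
    (hμ_lt : ∀ K K' : Subgroup G, K < K' →
      μ K K' = -∑ L ∈ Finset.univ.filter (fun L : Subgroup G => K < L ∧ L ≤ K'), μ L K') :
    (Nat.card H : ℤ) * (∑ K ∈ Finset.univ.filter (fun K : Subgroup G => H ≤ K),
        μ K ⊤ * (H.relIndex K : ℤ)) =
      Nat.card {g : G // ∀ M : Subgroup G, IsCoatom M → H ≤ M → g ∉ M} := by
  classical
  -- |H| * relindex = |K|
  have hcard : ∀ K : Subgroup G, H ≤ K → (Nat.card H : ℤ) * (H.relIndex K : ℤ) = Nat.card K := by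
    intro K hK
    have h1 : Nat.card (H.subgroupOf K) = Nat.card H :=
      Nat.card_congr (Subgroup.subgroupOfEquivOfLe hK).toEquiv
    have h2 : Nat.card (H.subgroupOf K) * (H.subgroupOf K).index = Nat.card K :=
      Subgroup.card_mul_index _
    rw [Subgroup.relIndex, ← h1]
    exact_mod_cast h2
  -- Möbius sum lemma
  have mob : ∀ L : Subgroup G, ∑ K ∈ univ.filter (fun K : Subgroup G => L ≤ K), μ K ⊤
      = if L = ⊤ then 1 else 0 := by
    intro L
    by_cases hL : L = ⊤
    · subst hL
      rw [if_pos rfl]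
      have hfil : univ.filter (fun K : Subgroup G => (⊤ : Subgroup G) ≤ K) = {⊤} := by
        ext K; simp [top_le_iff, eq_comm]
      rw [hfil, sum_singleton, hμ_self]
    · rw [if_neg hL]
      have hlt : L < ⊤ := lt_top_iff_ne_top.mpr hL
      have hsplit : univ.filter (fun K : Subgroup G => L ≤ K)
          = insert L (univ.filter (fun K : Subgroup G => L < K)) := by
        ext K
        simp only [mem_insert, mem_filter, mem_univ, true_and]
        constructor
        · intro h
          rcases lt_or_eq_of_le h with h' | h'
          · exact Or.inr h'
          · exact Or.inl h'.symm
        · rintro (rfl | h)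
          · exact le_rfl
          · exact h.le
      have hne : L ∉ univ.filter (fun K : Subgroup G => L < K) := by simp
      rw [hsplit, sum_insert hne, hμ_lt L ⊤ hlt]
      have : univ.filter (fun K : Subgroup G => L < K ∧ K ≤ ⊤)
          = univ.filter (fun K : Subgroup G => L < K) := by
        apply filter_congr; intro K _; simp
      rw [this]; ring
  -- condition equivalence
  have key : ∀ g : G, (H ⊔ Subgroup.zpowers g = ⊤)
      ↔ ∀ M : Subgroup G, IsCoatom M → H ≤ M → g ∉ M := by
    intro g
    constructor
    · intro h M hM hHM hg
      have hle : H ⊔ Subgroup.zpowers g ≤ M :=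
        sup_le hHM ((Subgroup.zpowers_le).mpr hg)
      rw [h, top_le_iff] at hle
      exact hM.1 hle
    · intro h
      by_contra hne
      obtain ⟨M, hM, hle⟩ :=
        (eq_top_or_exists_le_coatom (H ⊔ Subgroup.zpowers g)).resolve_left hne
      exact h M hM (le_trans le_sup_left hle)
        (hle (Subgroup.mem_sup_right (Subgroup.mem_zpowers g)))
  calc (Nat.card H : ℤ) * (∑ K ∈ univ.filter (fun K : Subgroup G => H ≤ K),
        μ K ⊤ * (H.relIndex K : ℤ))
      = ∑ K ∈ univ.filter (fun K : Subgroup G => H ≤ K), μ K ⊤ * (Nat.card K : ℤ) := by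
        rw [mul_sum]
        apply sum_congr rfl
        intro K hK
        rw [mem_filter] at hK
        rw [← hcard K hK.2]; ring
    _ = ∑ K ∈ univ.filter (fun K : Subgroup G => H ≤ K),
          ∑ g : G, (if g ∈ K then μ K ⊤ else 0) := by
        apply sum_congr rfl
        intro K _
        have hc : (Nat.card K : ℤ) = ∑ g : G, (if g ∈ K then (1:ℤ) else 0) := by
          rw [sum_boole, Nat.card_eq_fintype_card, Fintype.card_subtype]
        rw [hc, mul_sum]
        apply sum_congr rfl
        intro g _
        simp [mul_ite]
    _ = ∑ g : G, ∑ K ∈ univ.filter (fun K : Subgroup G => H ≤ K),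
          (if g ∈ K then μ K ⊤ else 0) := sum_comm
    _ = ∑ g : G, ∑ K ∈ univ.filter (fun K : Subgroup G => H ⊔ Subgroup.zpowers g ≤ K), μ K ⊤ := by
        apply sum_congr rfl
        intro g _
        rw [sum_filter, sum_filter]
        apply sum_congr rfl
        intro K _
        by_cases h : H ⊔ Subgroup.zpowers g ≤ K
        · rw [if_pos h, if_pos (le_trans le_sup_left h),
            if_pos (h (Subgroup.mem_sup_right (Subgroup.mem_zpowers g)))]
        · rw [if_neg h]
          rw [sup_le_iff, Subgroup.zpowers_le] at h
          push_neg at h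
          by_cases h1 : H ≤ K
          · rw [if_pos h1, if_neg (h h1)]
          · rw [if_neg h1]
    _ = ∑ g : G, (if H ⊔ Subgroup.zpowers g = ⊤ then (1 : ℤ) else 0) := by
        apply sum_congr rfl
        intro g _
        exact mob _
    _ = (Nat.card {g : G // ∀ M : Subgroup G, IsCoatom M → H ≤ M → g ∉ M} : ℤ) := by
        have : ∀ g : G, (if H ⊔ Subgroup.zpowers g = ⊤ then (1:ℤ) else 0)
            = (if (∀ M : Subgroup G, IsCoatom M → H ≤ M → g ∉ M) then (1:ℤ) else 0) := by
          intro g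
          exact if_congr (key g) rfl rfl
        rw [sum_congr rfl (fun g _ => this g), sum_boole,
          Nat.card_eq_fintype_card, Fintype.card_subtype]
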